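/- Let X ∈ ℂ, α ∈ ℝ, t ∈ ℝ, and let f_t : ℂ → ℂ be defined by f_t p = (1 − t) * p + t * (X + Complex.exp (α * Complex.I) * (p − X)). Then for all a, b, c ∈ ℂ, the signed area determinant scales by the nonnegative factor |c_t|²: Complex.im (conj (f_t b − f_t a) * (f_t c − f_t a)) = (Complex.abs ((1 − t) + t * Complex.exp (α * Complex.I)))^2 * Complex.im (conj (b − a) * (c − a)). Consequently, if additionally ¬(Complex.exp (α * Complex.I) = −1 ∧ t = 1/2), every positively oriented triangle remains positively oriented throughout the linear morph from a polygon to its rotation. (Orientation-preservation underlying Lemma 3.3 and Lemma 3.5 of the paper.) -/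

import Mathlib

/-- Orientation preservation (Lemmas 3.3, 3.5): the signed area determinant of
any triangle scales by `|c_t|²` under the time-`t` map of the linear morph to a
rotation; consequently, outside the degenerate case every positively oriented
triangle stays positively oriented. -/
theorem linear_morph_rotation_orientation
    (X : ℂ) (α t : ℝ) (f : ℂ → ℂ)
    (hf : ∀ p : ℂ, f p =
      (1 - (t : ℂ)) * p + (t : ℂ) * (X + Complex.exp ((α : ℂ) * Complex.I) * (p - X))) :
    (∀ a b c : ℂ,
      ((starRingEnd ℂ) (f b - f a) * (f c - f a)).im
        = ‖(1 - (t : ℂ)) + (t : ℂ) * Complex.exp ((α : ℂ) * Complex.I)‖ ^ 2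
            * ((starRingEnd ℂ) (b - a) * (c - a)).im) ∧
    (¬(Complex.exp ((α : ℂ) * Complex.I) = -1 ∧ t = 1 / 2) →
      ∀ a b c : ℂ, 0 < ((starRingEnd ℂ) (b - a) * (c - a)).im →
        0 < ((starRingEnd ℂ) (f b - f a) * (f c - f a)).im) := by
  set e : ℂ := Complex.exp ((α : ℂ) * Complex.I) with he
  set ct : ℂ := (1 - (t : ℂ)) + (t : ℂ) * e with hct
  have hdiff : ∀ p q : ℂ, f p - f q = ct * (p - q) := by
    intro p q
    rw [hf p, hf q]
    ring
  have key : ∀ a b c : ℂ,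
      ((starRingEnd ℂ) (f b - f a) * (f c - f a)).im
        = ‖ct‖ ^ 2 * ((starRingEnd ℂ) (b - a) * (c - a)).im := by
    intro a b c
    rw [hdiff b a, hdiff c a, map_mul]
    have h1 : (starRingEnd ℂ) ct * (starRingEnd ℂ) (b - a) * (ct * (c - a))
        = ((starRingEnd ℂ) ct * ct) * ((starRingEnd ℂ) (b - a) * (c - a)) := by ring
    rw [h1, Complex.conj_mul', ← Complex.ofReal_pow]
    simp [Complex.mul_im, ← Complex.ofReal_pow]
  refine ⟨key, ?_⟩
  intro hdeg a b c hpos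
  rw [key a b c]
  have hctne : ct ≠ 0 := by
    intro h0
    have hte : (t : ℂ) * e = (t : ℂ) - 1 := by linear_combination h0
    have hE : ‖e‖ = 1 := by
      rw [he, Complex.norm_exp]; simp
    have habs : ‖(t : ℂ) * e‖ = ‖(t : ℂ) - 1‖ := by rw [hte]
    have ht2 : |t| = |t - 1| := by
      simpa [map_mul, hE, ← Complex.ofReal_one, ← Complex.ofReal_sub,
        Complex.norm_real] using habs
    have ht : t = 1 / 2 := by
      rcases abs_eq_abs.mp ht2 with h | h <;> linarith
    apply hdeg
    refine ⟨?_, ht⟩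
    have htc : (t : ℂ) = 1 / 2 := by rw [ht]; norm_num
    rw [htc] at hte
    linear_combination 2 * hte
  have habs : 0 < ‖ct‖ := by
    simpa using (norm_pos_iff.mpr hctne)
  positivity
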